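/- arXiv:math/0410146 — 9 statements merged into one kernel-verified Lean document; each statement's English description precedes it below -/
import Mathlib

section
/- If f is continuous, B(R) ⊆ Ω, and ‖f(x)‖ < ‖x‖ for all x ∈ B(R) \ {0}, then for every x ∈ B(R) the iterates f^k(x) converge to 0 as k → ∞; i.e., B(R) is contained in the domain of attraction of 0. -/
set_option maxHeartbeats 1000000

open Metric Filter Finset

theorem stmt4 {n : ℕ} {Ω : Set (EuclideanSpace ℝ (Fin n))} (hΩ : IsOpen Ω)
    (h0 : (0 : EuclideanSpace ℝ (Fin n)) ∈ Ω)
    {f : EuclideanSpace ℝ (Fin n) → EuclideanSpace ℝ (Fin n)} (hmaps : Set.MapsTo f Ω Ω) (hf0 : f 0 = 0)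
    {R : ℝ} (hR : 0 < R) (hBR : Metric.ball (0 : EuclideanSpace ℝ (Fin n)) R ⊆ Ω)
    (hcontr : ∀ x ∈ Metric.ball (0 : EuclideanSpace ℝ (Fin n)) R \ {0}, ‖f x‖ < ‖x‖) (hcont : ContinuousOn f Ω) :
    ∀ x ∈ Metric.ball (0 : EuclideanSpace ℝ (Fin n)) R,
      Tendsto (fun k => f^[k] x) atTop (nhds (0 : EuclideanSpace ℝ (Fin n))) := by
  intro x hx
  have hle : ∀ y ∈ Metric.ball (0 : EuclideanSpace ℝ (Fin n)) R, ‖f y‖ ≤ ‖y‖ := by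
    intro y hy
    by_cases h : y = 0
    · simp [h, hf0]
    · exact (hcontr y ⟨hy, h⟩).le
  set u : ℕ → EuclideanSpace ℝ (Fin n) := fun k => f^[k] x with hu
  set a : ℕ → ℝ := fun k => ‖u k‖ with ha
  have key : ∀ k, a k ≤ ‖x‖ ∧ u k ∈ Metric.ball (0 : EuclideanSpace ℝ (Fin n)) R := by
    intro k
    induction k with
    | zero => exact ⟨le_rfl, hx⟩
    | succ k ih =>
      have h1 : a (k + 1) ≤ a k := by
        have := hle (u k) ih.2
        simpa [ha, hu, Function.iterate_succ_apply'] using this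
      refine ⟨h1.trans ih.1, ?_⟩
      rw [mem_ball_zero_iff] at ih ⊢
      exact lt_of_le_of_lt (h1.trans ih.1) (by rw [mem_ball_zero_iff] at hx; exact hx)
  have hxR : ‖x‖ < R := by rwa [mem_ball_zero_iff] at hx
  have hanti : Antitone a := antitone_nat_of_succ_le fun k => by
    have := hle (u k) (key k).2
    simpa [ha, hu, Function.iterate_succ_apply'] using this
  have hbdd : BddBelow (Set.range a) := ⟨0, by rintro _ ⟨k, rfl⟩; exact norm_nonneg _⟩
  set L : ℝ := ⨅ k, a k with hLdef
  have hL : Tendsto a atTop (nhds L) := tendsto_atTop_ciInf hanti hbdd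
  have hL0 : 0 ≤ L := le_ciInf fun k => norm_nonneg _
  have hLzero : L = 0 := by
    by_contra hne
    have hLpos : 0 < L := lt_of_le_of_ne hL0 (Ne.symm hne)
    have hcpt : IsCompact (Metric.closedBall (0 : EuclideanSpace ℝ (Fin n)) ‖x‖) :=
      isCompact_closedBall _ _
    have hmem : ∀ k, u k ∈ Metric.closedBall (0 : EuclideanSpace ℝ (Fin n)) ‖x‖ := fun k => by
      rw [mem_closedBall_zero_iff]; exact (key k).1
    obtain ⟨y, hy, φ, hφ, hsub⟩ := hcpt.tendsto_subseq hmem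
    have hnorm_y : Tendsto (fun k => a (φ k)) atTop (nhds ‖y‖) :=
      hsub.norm
    have hnorm_L : Tendsto (fun k => a (φ k)) atTop (nhds L) :=
      hL.comp hφ.tendsto_atTop
    have hyL : ‖y‖ = L := tendsto_nhds_unique hnorm_y hnorm_L
    have hyball : y ∈ Metric.ball (0 : EuclideanSpace ℝ (Fin n)) R := by
      rw [mem_ball_zero_iff, hyL]
      exact lt_of_le_of_lt (ciInf_le hbdd 0) hxR
    have hy0 : y ≠ 0 := by
      intro h
      rw [h, norm_zero] at hyL
      exact hne hyL.symm
    have hcy : ContinuousAt f y := hcont.continuousAt (hΩ.mem_nhds (hBR hyball))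
    have hfsub : Tendsto (fun k => f (u (φ k))) atTop (nhds (f y)) :=
      (hcy.tendsto).comp hsub
    have heq : (fun k => f (u (φ k))) = fun k => u (φ k + 1) := by
      funext k; simp [hu, Function.iterate_succ_apply']
    rw [heq] at hfsub
    have hnorm_fy : Tendsto (fun k => a (φ k + 1)) atTop (nhds ‖f y‖) :=
      hfsub.norm
    have hnorm_L' : Tendsto (fun k => a (φ k + 1)) atTop (nhds L) :=
      hL.comp (tendsto_atTop_mono (fun k => Nat.le_succ _) hφ.tendsto_atTop)
    have hfyL : ‖f y‖ = L := tendsto_nhds_unique hnorm_fy hnorm_L'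
    have := hcontr y ⟨hyball, hy0⟩
    rw [hfyL, hyL] at this
    exact lt_irrefl L this
  have hnormto : Tendsto a atTop (nhds 0) := hLzero ▸ hL
  exact tendsto_zero_iff_norm_tendsto_zero.mpr hnormto
end

section
/- Assume f is continuous, B(R) ⊆ Ω, and ‖f(x)‖ < ‖x‖ for all x ∈ B(R) \ {0}. For any p ≥ 0 and any c with 0 < c ≤ (p+1)R², the sublevel set N_p^c = {x ∈ Ω : Σ_{k=0}^{p} ‖f^k(x)‖² < c} is contained in the domain of attraction D_a(0). -/
open Metric Filter Finset

set_option maxHeartbeats 1000000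

lemma aux_tendsto {n : ℕ} {Ω : Set (EuclideanSpace ℝ (Fin n))} (hΩ : IsOpen Ω)
    {f : EuclideanSpace ℝ (Fin n) → EuclideanSpace ℝ (Fin n)} (hf0 : f 0 = 0)
    {R : ℝ} (hBR : Metric.ball (0 : EuclideanSpace ℝ (Fin n)) R ⊆ Ω)
    (hcontr : ∀ x ∈ Metric.ball (0 : EuclideanSpace ℝ (Fin n)) R \ {0}, ‖f x‖ < ‖x‖)
    (hcont : ContinuousOn f Ω) {y : EuclideanSpace ℝ (Fin n)} (hy : ‖y‖ < R) :
    Tendsto (fun m => f^[m] y) atTop (nhds (0 : EuclideanSpace ℝ (Fin n))) := by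
  have step : ∀ z : EuclideanSpace ℝ (Fin n), ‖z‖ < R → ‖f z‖ ≤ ‖z‖ := by
    intro z hz
    by_cases h : z = 0
    · simp [h, hf0]
    · exact le_of_lt (hcontr z ⟨by simpa [mem_ball, dist_eq_norm] using hz, h⟩)
  have norms : ∀ m, ‖f^[m] y‖ ≤ ‖y‖ := by
    intro m
    induction m with
    | zero => simp
    | succ m ih =>
      rw [Function.iterate_succ_apply']
      exact le_trans (step _ (lt_of_le_of_lt ih hy)) ih
  set u : ℕ → EuclideanSpace ℝ (Fin n) := fun m => f^[m] y with hu
  set r : ℕ → ℝ := fun m => ‖u m‖ with hr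
  have hanti : Antitone r := by
    apply antitone_nat_of_succ_le
    intro m
    show ‖f^[m+1] y‖ ≤ ‖f^[m] y‖
    rw [Function.iterate_succ_apply']
    exact step _ (lt_of_le_of_lt (norms m) hy)
  have hbdd : BddBelow (Set.range r) := ⟨0, by rintro _ ⟨m, rfl⟩; exact norm_nonneg _⟩
  set L : ℝ := ⨅ m, r m with hL
  have hrL : Tendsto r atTop (nhds L) := tendsto_atTop_ciInf hanti hbdd
  have hL0 : 0 ≤ L := le_ciInf fun m => norm_nonneg _
  have hLy : L ≤ ‖y‖ := by
    have := ciInf_le hbdd 0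
    exact this
  have hLzero : L = 0 := by
    by_contra hne
    have hLpos : 0 < L := lt_of_le_of_ne hL0 (Ne.symm hne)
    have hmem : ∀ m, u m ∈ closedBall (0 : EuclideanSpace ℝ (Fin n)) ‖y‖ := by
      intro m
      simpa [mem_closedBall, dist_eq_norm] using norms m
    obtain ⟨a, ha, φ, hφ, hconv⟩ :=
      (isCompact_closedBall (0 : EuclideanSpace ℝ (Fin n)) ‖y‖).tendsto_subseq hmem
    have hnorm_a : ‖a‖ = L := by
      have h1 : Tendsto (fun i => ‖u (φ i)‖) atTop (nhds ‖a‖) :=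
        (continuous_norm.continuousAt).tendsto.comp hconv
      have h2 : Tendsto (fun i => r (φ i)) atTop (nhds L) :=
        hrL.comp hφ.tendsto_atTop
      exact tendsto_nhds_unique h1 h2
    have haR : a ∈ ball (0 : EuclideanSpace ℝ (Fin n)) R := by
      simp only [mem_ball, dist_eq_norm, sub_zero]
      exact lt_of_le_of_lt (hnorm_a ▸ hLy) hy
    have haΩ : a ∈ Ω := hBR haR
    have hane : a ≠ 0 := by
      intro h
      rw [h] at hnorm_a
      simp at hnorm_a
      exact hne hnorm_a.symm
    have hfa : ‖f a‖ < L := by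
      have := hcontr a ⟨haR, hane⟩
      rwa [hnorm_a] at this
    have hca : ContinuousAt f a := hcont.continuousAt (hΩ.mem_nhds haΩ)
    have h3 : Tendsto (fun i => f (u (φ i))) atTop (nhds (f a)) :=
      hca.tendsto.comp hconv
    have h4 : Tendsto (fun i => ‖f (u (φ i))‖) atTop (nhds ‖f a‖) :=
      (continuous_norm.continuousAt).tendsto.comp h3
    have heq : ∀ i, ‖f (u (φ i))‖ = r (φ i + 1) := by
      intro i
      simp only [hr, hu, Function.iterate_succ_apply']
    have h5 : Tendsto (fun i => r (φ i + 1)) atTop (nhds L) := by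
      apply hrL.comp
      exact tendsto_atTop_mono (fun i => Nat.le_succ (φ i)) hφ.tendsto_atTop
    have : ‖f a‖ = L := by
      refine tendsto_nhds_unique ?_ h5
      simp only [heq] at h4
      exact h4
    exact absurd this (ne_of_lt hfa)
  have : Tendsto r atTop (nhds 0) := hLzero ▸ hrL
  exact tendsto_zero_iff_norm_tendsto_zero.mpr this

theorem stmt5 {n : ℕ} {Ω : Set (EuclideanSpace ℝ (Fin n))} (hΩ : IsOpen Ω)
    (h0 : (0 : EuclideanSpace ℝ (Fin n)) ∈ Ω)
    {f : EuclideanSpace ℝ (Fin n) → EuclideanSpace ℝ (Fin n)} (hmaps : Set.MapsTo f Ω Ω) (hf0 : f 0 = 0)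
    {R : ℝ} (hR : 0 < R) (hBR : Metric.ball (0 : EuclideanSpace ℝ (Fin n)) R ⊆ Ω)
    (hcontr : ∀ x ∈ Metric.ball (0 : EuclideanSpace ℝ (Fin n)) R \ {0}, ‖f x‖ < ‖x‖) (hcont : ContinuousOn f Ω)
    (p : ℕ) {c : ℝ} (hc0 : 0 < c) (hc : c ≤ (p + 1) * R ^ 2) :
    {x ∈ Ω | ∑ k ∈ Finset.range (p + 1), ‖f^[k] x‖ ^ 2 < c} ⊆
      {x ∈ Ω | Tendsto (fun k => f^[k] x) atTop (nhds (0 : EuclideanSpace ℝ (Fin n)))} := by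
  rintro x ⟨hxΩ, hsum⟩
  refine ⟨hxΩ, ?_⟩
  -- some iterate enters the ball
  have hexists : ∃ j, j ∈ Finset.range (p + 1) ∧ ‖f^[j] x‖ < R := by
    by_contra h
    push_neg at h
    have hge : ∀ k ∈ Finset.range (p + 1), R ^ 2 ≤ ‖f^[k] x‖ ^ 2 := by
      intro k hk
      exact pow_le_pow_left₀ hR.le (h k hk) 2
    have : (p + 1 : ℝ) * R ^ 2 ≤ ∑ k ∈ Finset.range (p + 1), ‖f^[k] x‖ ^ 2 := by
      calc (p + 1 : ℝ) * R ^ 2 = ∑ _k ∈ Finset.range (p + 1), R ^ 2 := by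
            simp [Finset.sum_const, mul_comm]
        _ ≤ _ := Finset.sum_le_sum hge
    linarith
  obtain ⟨j, _, hj⟩ := hexists
  have hmain := aux_tendsto hΩ hf0 hBR hcontr hcont hj
  rw [← tendsto_add_atTop_iff_nat j]
  simpa [Function.iterate_add_apply] using hmain
end

section
/- Assume B(R) ⊆ Ω and ‖f(x)‖ < ‖x‖ for all x ∈ B(R) \ {0}. Define N_p = {x ∈ Ω : Σ_{k=0}^{p} ‖f^k(x)‖² < (p+1)R²}. Then N_p ⊆ N_{p+1} for all p ≥ 0. -/
open Metric Filter Finset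

theorem stmt6 {n : ℕ} {Ω : Set (EuclideanSpace ℝ (Fin n))} (hΩ : IsOpen Ω)
    (h0 : (0 : EuclideanSpace ℝ (Fin n)) ∈ Ω)
    {f : EuclideanSpace ℝ (Fin n) → EuclideanSpace ℝ (Fin n)} (hmaps : Set.MapsTo f Ω Ω) (hf0 : f 0 = 0)
    {R : ℝ} (hR : 0 < R) (hBR : Metric.ball (0 : EuclideanSpace ℝ (Fin n)) R ⊆ Ω)
    (hcontr : ∀ x ∈ Metric.ball (0 : EuclideanSpace ℝ (Fin n)) R \ {0}, ‖f x‖ < ‖x‖) (p : ℕ) :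
    {x ∈ Ω | ∑ k ∈ Finset.range (p + 1), ‖f^[k] x‖ ^ 2 < (p + 1) * R ^ 2} ⊆
      {x ∈ Ω | ∑ k ∈ Finset.range (p + 2), ‖f^[k] x‖ ^ 2 < (p + 2) * R ^ 2} := by
  -- the ball is forward invariant
  have hinv : ∀ y ∈ Metric.ball (0 : EuclideanSpace ℝ (Fin n)) R,
      f y ∈ Metric.ball (0 : EuclideanSpace ℝ (Fin n)) R := by
    intro y hy
    rcases eq_or_ne y 0 with rfl | hne
    · rw [hf0, mem_ball_zero_iff]; simpa using hR
    · have := hcontr y ⟨hy, hne⟩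
      rw [mem_ball_zero_iff] at hy ⊢
      linarith
  have hiter : ∀ (m : ℕ), ∀ y ∈ Metric.ball (0 : EuclideanSpace ℝ (Fin n)) R,
      f^[m] y ∈ Metric.ball (0 : EuclideanSpace ℝ (Fin n)) R := by
    intro m
    induction m with
    | zero => simp
    | succ m ih =>
      intro y hy
      rw [Function.iterate_succ_apply]
      exact ih _ (hinv y hy)
  rintro x ⟨hxΩ, hsum⟩
  refine ⟨hxΩ, ?_⟩
  -- some iterate is in the ball
  have hex : ∃ k ∈ Finset.range (p + 1), ‖f^[k] x‖ ^ 2 < R ^ 2 := by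
    by_contra h
    push_neg at h
    have : (p + 1 : ℝ) * R ^ 2 ≤ ∑ k ∈ Finset.range (p + 1), ‖f^[k] x‖ ^ 2 := by
      calc (p + 1 : ℝ) * R ^ 2 = ∑ k ∈ Finset.range (p + 1), R ^ 2 := by
            simp [Finset.sum_const, mul_comm]
        _ ≤ ∑ k ∈ Finset.range (p + 1), ‖f^[k] x‖ ^ 2 := Finset.sum_le_sum h
    linarith
  obtain ⟨k, hk, hklt⟩ := hex
  rw [Finset.mem_range] at hk
  have hball : f^[k] x ∈ Metric.ball (0 : EuclideanSpace ℝ (Fin n)) R := by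
    rw [mem_ball_zero_iff]
    nlinarith [norm_nonneg (f^[k] x)]
  have hlast : f^[p + 1] x ∈ Metric.ball (0 : EuclideanSpace ℝ (Fin n)) R := by
    have h1 : p + 1 = (p + 1 - k) + k := by omega
    rw [h1, Function.iterate_add_apply]
    exact hiter _ _ hball
  rw [mem_ball_zero_iff] at hlast
  have hlast2 : ‖f^[p + 1] x‖ ^ 2 < R ^ 2 := by
    nlinarith [norm_nonneg (f^[p + 1] x)]
  rw [Finset.sum_range_succ]
  push_cast
  push_cast at hsum
  linarith
end

section
/- Assume B(R) ⊆ Ω and ‖f(x)‖ < ‖x‖ for all x ∈ B(R) \ {0}. Define N_p = {x ∈ Ω : Σ_{k=0}^{p} ‖f^k(x)‖² < (p+1)R²}. Then N_p is invariant under f: if x ∈ N_p then f(x) ∈ N_p. -/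
open Metric Filter Finset

lemma ballstep {n : ℕ} {f : EuclideanSpace ℝ (Fin n) → EuclideanSpace ℝ (Fin n)}
    (hf0 : f 0 = 0) {R : ℝ}
    (hcontr : ∀ x ∈ Metric.ball (0 : EuclideanSpace ℝ (Fin n)) R \ {0}, ‖f x‖ < ‖x‖)
    {y : EuclideanSpace ℝ (Fin n)} (hy : y ∈ Metric.ball (0 : EuclideanSpace ℝ (Fin n)) R)
    (m : ℕ) :
    ‖f^[m] y‖ ≤ ‖y‖ ∧ f^[m] y ∈ Metric.ball (0 : EuclideanSpace ℝ (Fin n)) R := by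
  induction m with
  | zero => exact ⟨le_refl _, hy⟩
  | succ m ih =>
    obtain ⟨h1, h2⟩ := ih
    rw [Function.iterate_succ_apply']
    by_cases hz : f^[m] y = 0
    · rw [hz, hf0]
      refine ⟨by simp [norm_nonneg], ?_⟩
      rw [mem_ball_zero_iff] at hy ⊢
      simp only [norm_zero]
      exact lt_of_le_of_lt (norm_nonneg y) hy
    · have hlt := hcontr _ ⟨h2, hz⟩
      refine ⟨le_trans hlt.le h1, ?_⟩
      rw [mem_ball_zero_iff] at h2 ⊢
      exact lt_trans hlt h2

theorem stmt7 {n : ℕ} {Ω : Set (EuclideanSpace ℝ (Fin n))} (hΩ : IsOpen Ω)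
    (h0 : (0 : EuclideanSpace ℝ (Fin n)) ∈ Ω)
    {f : EuclideanSpace ℝ (Fin n) → EuclideanSpace ℝ (Fin n)} (hmaps : Set.MapsTo f Ω Ω) (hf0 : f 0 = 0)
    {R : ℝ} (hR : 0 < R) (hBR : Metric.ball (0 : EuclideanSpace ℝ (Fin n)) R ⊆ Ω)
    (hcontr : ∀ x ∈ Metric.ball (0 : EuclideanSpace ℝ (Fin n)) R \ {0}, ‖f x‖ < ‖x‖) (p : ℕ) :
    ∀ x ∈ {x ∈ Ω | ∑ k ∈ Finset.range (p + 1), ‖f^[k] x‖ ^ 2 < (p + 1) * R ^ 2},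
      f x ∈ {x ∈ Ω | ∑ k ∈ Finset.range (p + 1), ‖f^[k] x‖ ^ 2 < (p + 1) * R ^ 2} := by
  rintro x ⟨hxΩ, hsum⟩
  refine ⟨hmaps hxΩ, ?_⟩
  -- some iterate is in the ball
  have hex : ∃ k ∈ Finset.range (p + 1), ‖f^[k] x‖ < R := by
    by_contra h
    push_neg at h
    have hge : ((p : ℝ) + 1) * R ^ 2 ≤ ∑ k ∈ Finset.range (p + 1), ‖f^[k] x‖ ^ 2 := by
      calc ((p : ℝ) + 1) * R ^ 2 = ∑ _k ∈ Finset.range (p + 1), R ^ 2 := by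
            rw [Finset.sum_const, Finset.card_range]; push_cast; ring
        _ ≤ _ := Finset.sum_le_sum fun k hk => by
            have := h k hk
            nlinarith [norm_nonneg (f^[k] x)]
    linarith
  obtain ⟨k₀, hk₀mem, hk₀⟩ := hex
  have hk₀le : k₀ ≤ p + 1 := le_of_lt (Finset.mem_range.mp hk₀mem)
  have hball : f^[k₀] x ∈ Metric.ball (0 : EuclideanSpace ℝ (Fin n)) R :=
    mem_ball_zero_iff.mpr hk₀
  have hplt : ‖f^[p + 1] x‖ < R := by
    have hle := (ballstep hf0 hcontr hball (p + 1 - k₀)).1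
    rw [← Function.iterate_add_apply, Nat.sub_add_cancel hk₀le] at hle
    exact lt_of_le_of_lt hle hk₀
  have hkey : ‖f^[p + 1] x‖ ≤ ‖x‖ := by
    by_cases hx : ‖x‖ < R
    · exact (ballstep hf0 hcontr (mem_ball_zero_iff.mpr hx) (p + 1)).1
    · exact le_trans hplt.le (le_of_not_gt hx)
  have heq : ∀ k, f^[k] (f x) = f^[k + 1] x := fun k =>
    (Function.iterate_succ_apply f k x).symm
  have hsum' : ∑ k ∈ Finset.range (p + 1), ‖f^[k] (f x)‖ ^ 2
      = ∑ k ∈ Finset.range (p + 1), ‖f^[k + 1] x‖ ^ 2 := by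
    exact Finset.sum_congr rfl fun k _ => by rw [heq]
  have h1 := Finset.sum_range_succ' (fun k => ‖f^[k] x‖ ^ 2) (p + 1)
  have h2 := Finset.sum_range_succ (fun k => ‖f^[k] x‖ ^ 2) (p + 1)
  simp only [Function.iterate_zero_apply] at h1 h2
  rw [hsum']
  have hx0 := norm_nonneg x
  have hp0 := norm_nonneg (f^[p + 1] x)
  nlinarith [hsum, hkey]
end

section
/- Assume B(R) ⊆ Ω and ‖f(x)‖ < ‖x‖ for all x ∈ B(R) \ {0}. Then for every p ≥ 0, N_p ⊆ M_p, where N_p = {x ∈ Ω : Σ_{k=0}^{p} ‖f^k(x)‖² < (p+1)R²} and M_p = {x ∈ Ω : f^p(x) ∈ B(R)}. -/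
open Metric Filter Finset

theorem stmt10 {n : ℕ} {Ω : Set (EuclideanSpace ℝ (Fin n))} (hΩ : IsOpen Ω)
    (h0 : (0 : EuclideanSpace ℝ (Fin n)) ∈ Ω)
    {f : EuclideanSpace ℝ (Fin n) → EuclideanSpace ℝ (Fin n)} (hmaps : Set.MapsTo f Ω Ω) (hf0 : f 0 = 0)
    {R : ℝ} (hR : 0 < R) (hBR : Metric.ball (0 : EuclideanSpace ℝ (Fin n)) R ⊆ Ω)
    (hcontr : ∀ x ∈ Metric.ball (0 : EuclideanSpace ℝ (Fin n)) R \ {0}, ‖f x‖ < ‖x‖) (p : ℕ) :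
    {x ∈ Ω | ∑ k ∈ Finset.range (p + 1), ‖f^[k] x‖ ^ 2 < (p + 1) * R ^ 2} ⊆
      {x ∈ Ω | f^[p] x ∈ Metric.ball (0 : EuclideanSpace ℝ (Fin n)) R} := by
  intro x hx
  obtain ⟨hxΩ, hsum⟩ := hx
  refine ⟨hxΩ, ?_⟩
  -- key step lemma: if y in ball then f y in ball
  have step : ∀ y : EuclideanSpace ℝ (Fin n), y ∈ Metric.ball (0 : EuclideanSpace ℝ (Fin n)) R →
      f y ∈ Metric.ball (0 : EuclideanSpace ℝ (Fin n)) R := by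
    intro y hy
    rw [mem_ball_zero_iff] at hy ⊢
    by_cases hy0 : y = 0
    · simp [hy0, hf0, hR]
    · exact (hcontr y ⟨mem_ball_zero_iff.mpr hy, hy0⟩).trans hy
  -- there exists k ≤ p with ‖f^[k] x‖ < R
  have hex : ∃ k ∈ Finset.range (p + 1), ‖f^[k] x‖ < R := by
    by_contra h
    push_neg at h
    have : (p + 1 : ℝ) * R ^ 2 ≤ ∑ k ∈ Finset.range (p + 1), ‖f^[k] x‖ ^ 2 := by
      calc (p + 1 : ℝ) * R ^ 2 = ∑ _k ∈ Finset.range (p + 1), R ^ 2 := by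
            simp [mul_comm]
        _ ≤ ∑ k ∈ Finset.range (p + 1), ‖f^[k] x‖ ^ 2 := by
            apply Finset.sum_le_sum
            intro k hk
            exact pow_le_pow_left₀ hR.le (h k hk) 2
    linarith
  obtain ⟨k, hk, hkR⟩ := hex
  rw [Finset.mem_range, Nat.lt_succ_iff] at hk
  -- induct from k to p
  have hall : ∀ m, f^[k + m] x ∈ Metric.ball (0 : EuclideanSpace ℝ (Fin n)) R := by
    intro m
    induction m with
    | zero => simpa using mem_ball_zero_iff.mpr hkR
    | succ m ih =>
      rw [← add_assoc, Function.iterate_succ_apply']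
      exact step _ ih
  obtain ⟨m, rfl⟩ := Nat.exists_eq_add_of_le hk
  exact hall m
end

section
/- Suppose p̃ ≥ 1, B(R̃) ⊆ Ω, and ‖f^p(x)‖ < ‖x‖ for all p ∈ {p̃, …, 2p̃−1} and all x ∈ B(R̃) \ {0}. Then for every k ≥ p̃ there exists q_k ∈ ℕ such that for all x ∈ B(R̃): ‖f^{(q_k+3)p̃}(x)‖ ≤ ‖f^k(x)‖ ≤ ‖f^{q_k p̃}(x)‖. -/
open Metric Filter Finset

theorem stmt14 {n : ℕ} {Ω : Set (EuclideanSpace ℝ (Fin n))} (hΩ : IsOpen Ω)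
    (h0 : (0 : EuclideanSpace ℝ (Fin n)) ∈ Ω)
    {f : EuclideanSpace ℝ (Fin n) → EuclideanSpace ℝ (Fin n)} (hmaps : Set.MapsTo f Ω Ω) (hf0 : f 0 = 0)
    {pt : ℕ} (hpt : 1 ≤ pt)
    {R : ℝ} (hR : 0 < R) (hBR : Metric.ball (0 : EuclideanSpace ℝ (Fin n)) R ⊆ Ω)
    (hcontr : ∀ p, pt ≤ p → p ≤ 2 * pt - 1 →
      ∀ x ∈ Metric.ball (0 : EuclideanSpace ℝ (Fin n)) R \ {0}, ‖f^[p] x‖ < ‖x‖) :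
    ∀ k, pt ≤ k → ∃ q : ℕ, ∀ x ∈ Metric.ball (0 : EuclideanSpace ℝ (Fin n)) R,
      ‖f^[(q + 3) * pt] x‖ ≤ ‖f^[k] x‖ ∧ ‖f^[k] x‖ ≤ ‖f^[q * pt] x‖ := by
  have key : ∀ m, pt ≤ m → ∀ x, x ∈ Metric.ball (0 : EuclideanSpace ℝ (Fin n)) R →
      ‖f^[m] x‖ ≤ ‖x‖ := by
    intro m
    induction m using Nat.strong_induction_on with
    | _ m ih =>
      intro hm x hx
      by_cases hx0 : x = 0
      · subst hx0
        simp [Function.iterate_fixed hf0]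
      · by_cases hm2 : m ≤ 2 * pt - 1
        · exact (hcontr m hm hm2 x ⟨hx, hx0⟩).le
        · have h1 : pt ≤ m - pt := by omega
          have h2 : m - pt < m := by omega
          have heq : f^[m] x = f^[pt] (f^[m - pt] x) := by
            rw [← Function.iterate_add_apply]
            congr 1
            omega
          have hy := ih (m - pt) h2 h1 x hx
          have hyball : f^[m - pt] x ∈ Metric.ball (0 : EuclideanSpace ℝ (Fin n)) R := by
            rw [mem_ball_zero_iff]
            exact lt_of_le_of_lt hy (mem_ball_zero_iff.mp hx)
          have := ih pt (by omega) le_rfl _ hyball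
          rw [heq]
          exact this.trans hy
  have hstay : ∀ m, pt ≤ m → ∀ x, x ∈ Metric.ball (0 : EuclideanSpace ℝ (Fin n)) R →
      f^[m] x ∈ Metric.ball (0 : EuclideanSpace ℝ (Fin n)) R := by
    intro m hm x hx
    rw [mem_ball_zero_iff]
    exact lt_of_le_of_lt (key m hm x hx) (mem_ball_zero_iff.mp hx)
  intro k hk
  have hdm := Nat.div_add_mod k pt
  have hmod : k % pt < pt := Nat.mod_lt _ (by omega)
  have hdiv1 : 1 ≤ k / pt := Nat.one_le_div_iff (by omega) |>.mpr hk
  have e0 : (k / pt) * pt = pt * (k / pt) := Nat.mul_comm _ _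
  by_cases hr : k % pt = 0
  · refine ⟨k / pt, fun x hx => ?_⟩
    have e1 : (k / pt + 3) * pt = pt * (k / pt) + 3 * pt := by
      rw [Nat.add_mul, Nat.mul_comm]
    have hkq : (k / pt) * pt = k := by omega
    constructor
    · have heq : f^[(k / pt + 3) * pt] x = f^[3 * pt] (f^[k] x) := by
        rw [← Function.iterate_add_apply]
        congr 1
        omega
      rw [heq]
      exact key (3 * pt) (by omega) _ (hstay k hk x hx)
    · rw [hkq]
  · refine ⟨k / pt - 1, fun x hx => ?_⟩
    have e1 : (k / pt - 1) * pt = pt * (k / pt) - pt := by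
      rw [Nat.sub_mul, one_mul, Nat.mul_comm]
    have e2 : (k / pt - 1 + 3) * pt = pt * (k / pt) + 2 * pt := by
      have h3 : k / pt - 1 + 3 = k / pt + 2 := by omega
      rw [h3, Nat.add_mul, Nat.mul_comm]
    have hqball : f^[(k / pt - 1) * pt] x ∈ Metric.ball (0 : EuclideanSpace ℝ (Fin n)) R := by
      rcases Nat.eq_zero_or_pos (k / pt - 1) with h | h
      · rw [h]
        simpa using hx
      · exact hstay _ (Nat.le_mul_of_pos_left pt h) x hx
    constructor
    · have heq : f^[(k / pt - 1 + 3) * pt] x = f^[(k / pt - 1 + 3) * pt - k] (f^[k] x) := by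
        rw [← Function.iterate_add_apply]
        congr 1
        omega
      rw [heq]
      exact key _ (by omega) _ (hstay k hk x hx)
    · have heq : f^[k] x = f^[k - (k / pt - 1) * pt] (f^[(k / pt - 1) * pt] x) := by
        rw [← Function.iterate_add_apply]
        congr 1
        omega
      rw [heq]
      exact key _ (by omega) _ hqball
end

section
/- Suppose f is continuous, p̃ ≥ 1, B(R̃) ⊆ Ω, and ‖f^p(x)‖ < ‖x‖ for all p ∈ {p̃, …, 2p̃−1} and all x ∈ B(R̃) \ {0}. Then every x ∈ B(R̃) satisfies f^k(x) → 0 as k → ∞; i.e., B(R̃) is contained in the domain of attraction of 0. -/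
open Metric Filter Finset

theorem stmt15 {n : ℕ} {Ω : Set (EuclideanSpace ℝ (Fin n))} (hΩ : IsOpen Ω)
    (h0 : (0 : EuclideanSpace ℝ (Fin n)) ∈ Ω)
    {f : EuclideanSpace ℝ (Fin n) → EuclideanSpace ℝ (Fin n)} (hmaps : Set.MapsTo f Ω Ω) (hf0 : f 0 = 0)
    {pt : ℕ} (hpt : 1 ≤ pt)
    {R : ℝ} (hR : 0 < R) (hBR : Metric.ball (0 : EuclideanSpace ℝ (Fin n)) R ⊆ Ω)
    (hcontr : ∀ p, pt ≤ p → p ≤ 2 * pt - 1 →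
      ∀ x ∈ Metric.ball (0 : EuclideanSpace ℝ (Fin n)) R \ {0}, ‖f^[p] x‖ < ‖x‖) (hcont : ContinuousOn f Ω) :
    ∀ x ∈ Metric.ball (0 : EuclideanSpace ℝ (Fin n)) R,
      Tendsto (fun k => f^[k] x) atTop (nhds (0 : EuclideanSpace ℝ (Fin n))) := by
  have hfix : ∀ k, f^[k] (0 : EuclideanSpace ℝ (Fin n)) = 0 := fun k => Function.iterate_fixed hf0 k
  have hIter : ∀ m, ContinuousOn (f^[m]) Ω := by
    intro m
    induction m with
    | zero => simpa using continuousOn_id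
    | succ m ih =>
      rw [Function.iterate_succ']
      exact hcont.comp ih (hmaps.iterate m)
  have lemA : ∀ x, x ∈ Metric.ball (0 : EuclideanSpace ℝ (Fin n)) R → x ≠ 0 →
      ∀ k, pt ≤ k → ‖f^[k] x‖ < ‖x‖ := by
    intro x hx hx0 k
    induction k using Nat.strong_induction_on with
    | _ k ih =>
      intro hk
      by_cases hk2 : k ≤ 2 * pt - 1
      · exact hcontr k hk hk2 x ⟨hx, hx0⟩
      · have h2 : 2 * pt ≤ k := by omega
        have hjpt : pt ≤ k - pt := by omega
        have hjk : k - pt < k := by omega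
        have hy : ‖f^[k - pt] x‖ < ‖x‖ := ih (k - pt) hjk hjpt
        have hkey : f^[k] x = f^[pt] (f^[k - pt] x) := by
          rw [← Function.iterate_add_apply]
          congr 1
          omega
        by_cases hy0 : f^[k - pt] x = 0
        · rw [hkey, hy0, hfix]
          simpa using norm_pos_iff.mpr hx0
        · have hyball : f^[k - pt] x ∈ Metric.ball (0 : EuclideanSpace ℝ (Fin n)) R :=
            mem_ball_zero_iff.mpr (hy.trans (mem_ball_zero_iff.mp hx))
          have := hcontr pt le_rfl (by omega) _ ⟨hyball, hy0⟩
          rw [hkey]; exact this.trans hy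
  intro x hx
  by_cases hzero : ∃ k0, f^[k0] x = 0
  · obtain ⟨k0, hk0⟩ := hzero
    have hconst : ∀ k, k0 ≤ k → f^[k] x = 0 := by
      intro k hk
      have : f^[k] x = f^[k - k0] (f^[k0] x) := by
        rw [← Function.iterate_add_apply]; congr 1; omega
      rw [this, hk0, hfix]
    refine Tendsto.congr' ?_ tendsto_const_nhds
    filter_upwards [eventually_ge_atTop k0] with k hk
    exact (hconst k hk).symm
  push_neg at hzero
  have hx0 : x ≠ 0 := by simpa using hzero 0
  have hxR : ‖x‖ < R := mem_ball_zero_iff.mp hx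
  rw [NormedAddCommGroup.tendsto_nhds_zero]
  intro ε hε
  set δ := ε / 2 with hδdef
  have hδpos : 0 < δ := by positivity
  have hδε : δ < ε := by simp only [hδdef]; linarith
  by_cases hsmall : ‖x‖ < δ
  · filter_upwards [eventually_ge_atTop pt] with k hk
    exact ((lemA x hx hx0 k hk).trans hsmall).trans hδε
  · push_neg at hsmall
    set K := Metric.closedBall (0 : EuclideanSpace ℝ (Fin n)) ‖x‖ \
      Metric.ball (0 : EuclideanSpace ℝ (Fin n)) δ with hKdef
    have hKcomp : IsCompact K := (isCompact_closedBall _ _).diff isOpen_ball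
    have hxK : x ∈ K := ⟨mem_closedBall_zero_iff.mpr le_rfl, by
      simp only [mem_ball_zero_iff, not_lt]; exact hsmall⟩
    have hKball : K ⊆ Metric.ball (0 : EuclideanSpace ℝ (Fin n)) R := fun y hy =>
      mem_ball_zero_iff.mpr (lt_of_le_of_lt (mem_closedBall_zero_iff.mp hy.1) hxR)
    have hKpos : ∀ y ∈ K, 0 < ‖y‖ := fun y hy => by
      have : δ ≤ ‖y‖ := by
        have := hy.2
        simpa only [mem_ball_zero_iff, not_lt] using this
      linarith
    have hgcont : ContinuousOn (fun y => ‖f^[pt] y‖ / ‖y‖) K :=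
      ContinuousOn.div (((hIter pt).mono (hKball.trans hBR)).norm)
        continuous_norm.continuousOn (fun y hy => ne_of_gt (hKpos y hy))
    obtain ⟨y0, hy0K, hy0max'⟩ := hKcomp.exists_isMaxOn ⟨x, hxK⟩ hgcont
    have hy0max : ∀ y ∈ K, ‖f^[pt] y‖ / ‖y‖ ≤ ‖f^[pt] y0‖ / ‖y0‖ := fun y hy => hy0max' hy
    set c := ‖f^[pt] y0‖ / ‖y0‖ with hcdef
    have hy0pos : 0 < ‖y0‖ := hKpos y0 hy0K
    have hy0ne : y0 ≠ 0 := norm_pos_iff.mp hy0pos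
    have hclt : c < 1 := by
      rw [hcdef, div_lt_one hy0pos]
      exact hcontr pt le_rfl (by omega) y0 ⟨hKball hy0K, hy0ne⟩
    have hc0 : (0 : ℝ) ≤ c := div_nonneg (norm_nonneg _) (norm_nonneg _)
    have hcontr' : ∀ y ∈ K, ‖f^[pt] y‖ ≤ c * ‖y‖ := by
      intro y hy
      have h1 := hy0max y hy
      have h2 : 0 < ‖y‖ := hKpos y hy
      calc ‖f^[pt] y‖ = ‖f^[pt] y‖ / ‖y‖ * ‖y‖ := by field_simp
        _ ≤ c * ‖y‖ := mul_le_mul_of_nonneg_right h1 (norm_nonneg _)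
    have main : ∀ m r, r < pt → ‖f^[pt + m * pt + r] x‖ ≤ max δ (c ^ m * ‖x‖) := by
      intro m
      induction m with
      | zero =>
        intro r hr
        have h := lemA x hx hx0 (pt + 0 * pt + r) (by omega)
        refine le_max_of_le_right ?_
        simpa using h.le
      | succ m ih =>
        intro r hr
        have hidx : pt + (m + 1) * pt + r = pt + (pt + m * pt + r) := by ring
        have hstep : f^[pt + (m + 1) * pt + r] x = f^[pt] (f^[pt + m * pt + r] x) := by
          rw [hidx, Function.iterate_add_apply]
        set y := f^[pt + m * pt + r] x with hydef
        have hyn : y ≠ 0 := hzero _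
        have hylt : ‖y‖ < ‖x‖ := lemA x hx hx0 _ (by omega)
        have hyball : y ∈ Metric.ball (0 : EuclideanSpace ℝ (Fin n)) R :=
          mem_ball_zero_iff.mpr (hylt.trans hxR)
        by_cases hyδ : ‖y‖ < δ
        · rw [hstep]
          have h := hcontr pt le_rfl (by omega) y ⟨hyball, hyn⟩
          exact le_max_of_le_left ((h.trans hyδ).le)
        · push_neg at hyδ
          have hyK : y ∈ K := ⟨mem_closedBall_zero_iff.mpr hylt.le, by
            simp only [mem_ball_zero_iff, not_lt]; exact hyδ⟩
          rw [hstep]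
          calc ‖f^[pt] y‖ ≤ c * ‖y‖ := hcontr' y hyK
            _ ≤ c * max δ (c ^ m * ‖x‖) := mul_le_mul_of_nonneg_left (ih r hr) hc0
            _ = max (c * δ) (c * (c ^ m * ‖x‖)) := mul_max_of_nonneg _ _ hc0
            _ ≤ max δ (c ^ (m + 1) * ‖x‖) := by
                apply max_le_max
                · exact mul_le_of_le_one_left hδpos.le hclt.le
                · rw [pow_succ]; ring_nf; exact le_rfl
    obtain ⟨M, hM⟩ : ∃ M, c ^ M * ‖x‖ < δ := by
      have ht : Tendsto (fun m => c ^ m * ‖x‖) atTop (nhds (0 * ‖x‖)) :=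
        (tendsto_pow_atTop_nhds_zero_of_lt_one hc0 hclt).mul_const ‖x‖
      rw [zero_mul] at ht
      exact (ht.eventually (gt_mem_nhds hδpos)).exists
    filter_upwards [eventually_ge_atTop (pt + M * pt)] with k hk
    have hkpt : pt ≤ k := le_trans (Nat.le_add_right _ _) hk
    set m := (k - pt) / pt with hmdef
    set r := (k - pt) % pt with hrdef
    have hrlt : r < pt := Nat.mod_lt _ (by omega)
    have hksplit : k = pt + m * pt + r := by
      have h1 : m * pt + r = k - pt := by
        rw [hmdef, hrdef, Nat.mul_comm]; exact Nat.div_add_mod _ _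
      omega
    have hMm : M ≤ m := by
      rw [hmdef, Nat.le_div_iff_mul_le (by omega : 0 < pt)]
      omega
    have hbound := main m r hrlt
    rw [← hksplit] at hbound
    have hcm : c ^ m ≤ c ^ M := pow_le_pow_of_le_one hc0 hclt.le hMm
    have : c ^ m * ‖x‖ ≤ c ^ M * ‖x‖ := mul_le_mul_of_nonneg_right hcm (norm_nonneg _)
    calc ‖f^[k] x‖ ≤ max δ (c ^ m * ‖x‖) := hbound
      _ ≤ δ := max_le le_rfl (this.trans hM.le)
      _ < ε := hδε
end

section
/- Suppose f is continuous, p̃ ≥ 1, B(R̃) ⊆ Ω, and ‖f^p(x)‖ < ‖x‖ for all p ∈ {p̃, …, 2p̃−1} and all x ∈ B(R̃) \ {0}. For any p ≥ p̃ and c with 0 < c ≤ (p+1)R̃², the set {x ∈ Ω : Σ_{k=0}^{p} ‖f^k(x)‖² < c} is contained in the domain of attraction D_a(0). -/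
open Metric Filter Finset

set_option maxHeartbeats 1600000 in
theorem stmt16 {n : ℕ} {Ω : Set (EuclideanSpace ℝ (Fin n))} (hΩ : IsOpen Ω)
    (h0 : (0 : EuclideanSpace ℝ (Fin n)) ∈ Ω)
    {f : EuclideanSpace ℝ (Fin n) → EuclideanSpace ℝ (Fin n)} (hmaps : Set.MapsTo f Ω Ω) (hf0 : f 0 = 0)
    {pt : ℕ} (hpt : 1 ≤ pt)
    {R : ℝ} (hR : 0 < R) (hBR : Metric.ball (0 : EuclideanSpace ℝ (Fin n)) R ⊆ Ω)
    (hcontr : ∀ p, pt ≤ p → p ≤ 2 * pt - 1 →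
      ∀ x ∈ Metric.ball (0 : EuclideanSpace ℝ (Fin n)) R \ {0}, ‖f^[p] x‖ < ‖x‖) (hcont : ContinuousOn f Ω)
    {p : ℕ} (hp : pt ≤ p) {c : ℝ} (hc0 : 0 < c) (hc : c ≤ (p + 1) * R ^ 2) :
    {x ∈ Ω | ∑ k ∈ Finset.range (p + 1), ‖f^[k] x‖ ^ 2 < c} ⊆
      {x ∈ Ω | Tendsto (fun k => f^[k] x) atTop (nhds (0 : EuclideanSpace ℝ (Fin n)))} := by
  have hfix : ∀ m, f^[m] (0 : EuclideanSpace ℝ (Fin n)) = 0 := fun m =>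
    Function.iterate_fixed hf0 m
  -- Claim A : any iterate count ≥ pt does not increase the norm on the ball
  have claimA : ∀ m, pt ≤ m → ∀ y : EuclideanSpace ℝ (Fin n), ‖y‖ < R → ‖f^[m] y‖ ≤ ‖y‖ := by
    intro m
    induction m using Nat.strong_induction_on with
    | _ m ih =>
      intro hm y hy
      by_cases hy0 : y = 0
      · simp [hy0, hfix]
      rcases le_or_gt m (2 * pt - 1) with hle | hgt
      · exact (hcontr m hm hle y ⟨mem_ball_zero_iff.2 hy, hy0⟩).le
      · have h1 : ‖f^[pt] y‖ ≤ ‖y‖ := ih pt (by omega) le_rfl y hy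
        have h2 : ‖f^[m - pt] (f^[pt] y)‖ ≤ ‖f^[pt] y‖ :=
          ih (m - pt) (by omega) (by omega) _ (lt_of_le_of_lt h1 hy)
        calc ‖f^[m] y‖ = ‖f^[m - pt] (f^[pt] y)‖ := by
              rw [← Function.iterate_add_apply]; congr 2; omega
          _ ≤ ‖y‖ := h2.trans h1
  -- strict version
  have claimA' : ∀ m, pt ≤ m → ∀ y : EuclideanSpace ℝ (Fin n), ‖y‖ < R → y ≠ 0 →
      ‖f^[m] y‖ < ‖y‖ := by
    intro m hm y hy hy0
    rcases le_or_gt m (2 * pt - 1) with hle | hgt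
    · exact hcontr m hm hle y ⟨mem_ball_zero_iff.2 hy, hy0⟩
    · have h1 : ‖f^[pt] y‖ < ‖y‖ := hcontr pt le_rfl (by omega) y ⟨mem_ball_zero_iff.2 hy, hy0⟩
      have h2 : ‖f^[m - pt] (f^[pt] y)‖ ≤ ‖f^[pt] y‖ :=
        claimA (m - pt) (by omega) _ (h1.trans hy)
      calc ‖f^[m] y‖ = ‖f^[m - pt] (f^[pt] y)‖ := by
            rw [← Function.iterate_add_apply]; congr 2; omega
        _ < ‖y‖ := lt_of_le_of_lt h2 h1
  -- continuity of iterates on Ω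
  have hcontI : ∀ m, ContinuousOn f^[m] Ω := by
    intro m
    induction m with
    | zero => simpa using continuousOn_id
    | succ k ih =>
      rw [Function.iterate_succ' f k]
      exact hcont.comp ih (hmaps.iterate k)
  -- Claim B : every point of the ball is attracted to 0
  have claimB : ∀ y : EuclideanSpace ℝ (Fin n), ‖y‖ < R →
      Tendsto (fun m => f^[m] y) atTop (nhds 0) := by
    intro y hy
    set z : ℕ → EuclideanSpace ℝ (Fin n) := fun j => f^[pt * j] y with hz
    have hz_norm : ∀ j, ‖z j‖ ≤ ‖y‖ := by
      intro j
      cases j with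
      | zero => simp [hz]
      | succ j =>
        exact claimA (pt * (j + 1)) (Nat.le_mul_of_pos_right pt (Nat.succ_pos j)) y hy
    have hzR : ∀ j, ‖z j‖ < R := fun j => lt_of_le_of_lt (hz_norm j) hy
    have hstep : ∀ j, z (j + 1) = f^[pt] (z j) := by
      intro j
      show f^[pt * (j + 1)] y = f^[pt] (f^[pt * j] y)
      rw [← Function.iterate_add_apply]
      congr 2
      ring
    have hb_anti : Antitone fun j => ‖z j‖ := by
      apply antitone_nat_of_succ_le
      intro j
      rw [hstep j]
      exact claimA pt le_rfl (z j) (hzR j)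
    have hbdd : BddBelow (Set.range fun j => ‖z j‖) :=
      ⟨0, by rintro _ ⟨j, rfl⟩; exact norm_nonneg _⟩
    set L : ℝ := ⨅ j, ‖z j‖ with hL
    have hbL : Tendsto (fun j => ‖z j‖) atTop (nhds L) :=
      tendsto_atTop_ciInf hb_anti hbdd
    have hL0 : 0 ≤ L := le_ciInf fun j => norm_nonneg _
    -- L = 0 via compactness
    have hLzero : L = 0 := by
      by_contra hne
      have hLpos : 0 < L := lt_of_le_of_ne hL0 (Ne.symm hne)
      have hzmem : ∀ j, z j ∈ closedBall (0 : EuclideanSpace ℝ (Fin n)) ‖y‖ := fun j =>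
        mem_closedBall_zero_iff.2 (hz_norm j)
      obtain ⟨w, hw_mem, φ, hφ, hφt⟩ :=
        (isCompact_closedBall (0 : EuclideanSpace ℝ (Fin n)) ‖y‖).tendsto_subseq hzmem
      have hnormw : Tendsto (fun j => ‖z (φ j)‖) atTop (nhds ‖w‖) :=
        (continuous_norm.tendsto w).comp hφt
      have hnormw' : Tendsto (fun j => ‖z (φ j)‖) atTop (nhds L) :=
        hbL.comp hφ.tendsto_atTop
      have hwL : ‖w‖ = L := tendsto_nhds_unique hnormw hnormw'
      have hwR : ‖w‖ < R := by
        have : L ≤ ‖z 0‖ := ciInf_le hbdd 0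
        have h0' : ‖z 0‖ = ‖y‖ := by simp [hz]
        rw [hwL]; linarith [hy, h0' ▸ this]
      have hw0 : w ≠ 0 := by
        intro h
        rw [h, norm_zero] at hwL
        exact hne hwL.symm
      have hwΩ : w ∈ Ω := hBR (mem_ball_zero_iff.2 hwR)
      have hca : ContinuousAt f^[pt] w := (hcontI pt).continuousAt (hΩ.mem_nhds hwΩ)
      have ht1 : Tendsto (fun j => f^[pt] (z (φ j))) atTop (nhds (f^[pt] w)) :=
        hca.tendsto.comp hφt
      have ht2 : Tendsto (fun j => ‖f^[pt] (z (φ j))‖) atTop (nhds ‖f^[pt] w‖) :=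
        (continuous_norm.tendsto _).comp ht1
      have heq : (fun j => ‖f^[pt] (z (φ j))‖) = fun j => ‖z (φ j + 1)‖ := by
        funext j; rw [hstep (φ j)]
      have ht3 : Tendsto (fun j => ‖z (φ j + 1)‖) atTop (nhds L) :=
        hbL.comp ((tendsto_add_atTop_nat 1).comp hφ.tendsto_atTop)
      rw [heq] at ht2
      have : ‖f^[pt] w‖ = L := tendsto_nhds_unique ht2 ht3
      have hlt : ‖f^[pt] w‖ < ‖w‖ := claimA' pt le_rfl w hwR hw0
      rw [this, hwL] at hlt
      exact lt_irrefl L hlt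
    have hb0 : Tendsto (fun j => ‖z j‖) atTop (nhds 0) := by
      rw [hLzero] at hbL; exact hbL
    -- deduce the full sequence tends to 0
    rw [tendsto_zero_iff_norm_tendsto_zero]
    have hdiv : Tendsto (fun m : ℕ => m / pt - 1) atTop atTop := by
      refine Filter.tendsto_atTop.2 fun b =>
        Filter.eventually_atTop.2 ⟨(b + 1) * pt, fun m hm => ?_⟩
      have : b + 1 ≤ m / pt := (Nat.le_div_iff_mul_le (by omega)).2 hm
      omega
    refine squeeze_zero' (Eventually.of_forall fun m => norm_nonneg _)
      ?_ (hb0.comp hdiv)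
    filter_upwards [Filter.eventually_ge_atTop pt] with m hm
    -- show ‖f^[m] y‖ ≤ ‖z (m / pt - 1)‖
    have hd1 : 1 ≤ m / pt := (Nat.le_div_iff_mul_le (by omega)).2 (by omega)
    obtain ⟨j, hj⟩ : ∃ j, m / pt = j + 1 := ⟨m / pt - 1, by omega⟩
    have hmul : pt * (j + 1) ≤ m := by
      have h := Nat.div_mul_le_self m pt
      rw [hj] at h
      calc pt * (j + 1) = (j + 1) * pt := mul_comm _ _
        _ ≤ m := h
    have hpd : pt * (j + 1) = pt * j + pt := by ring
    have hsplit : f^[m] y = f^[m - pt * j] (z j) := by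
      show f^[m] y = f^[m - pt * j] (f^[pt * j] y)
      rw [← Function.iterate_add_apply]
      congr 2
      omega
    have hge : pt ≤ m - pt * j := by omega
    have : ‖f^[m] y‖ ≤ ‖z j‖ := by
      rw [hsplit]
      exact claimA (m - pt * j) hge (z j) (hzR j)
    simpa [hj] using this
  -- main argument
  intro x hx
  obtain ⟨hxΩ, hsum⟩ := hx
  have hex : ∃ k ≤ p, ‖f^[k] x‖ < R := by
    by_contra h
    push_neg at h
    have hbound : (p + 1 : ℝ) * R ^ 2 ≤ ∑ k ∈ Finset.range (p + 1), ‖f^[k] x‖ ^ 2 := by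
      calc (p + 1 : ℝ) * R ^ 2 = ∑ _k ∈ Finset.range (p + 1), R ^ 2 := by
            simp [Finset.sum_const, Finset.card_range, mul_comm]
        _ ≤ ∑ k ∈ Finset.range (p + 1), ‖f^[k] x‖ ^ 2 := by
            apply Finset.sum_le_sum
            intro k hk
            exact pow_le_pow_left₀ hR.le (h k (Nat.lt_succ_iff.1 (Finset.mem_range.1 hk))) 2
    linarith
  obtain ⟨k, hk, hball⟩ := hex
  refine ⟨hxΩ, ?_⟩
  have htB := claimB (f^[k] x) hball
  have h2 : Tendsto (fun m => f^[m + k] x) atTop (nhds 0) := by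
    simpa [Function.iterate_add_apply] using htB
  exact (tendsto_add_atTop_iff_nat k).1 h2
end

section
/- Suppose p̃ ≥ 1, B(R̃) ⊆ Ω, and ‖f^p(x)‖ < ‖x‖ for all p ∈ {p̃, …, 2p̃−1} and all x ∈ B(R̃) \ {0}. Then for every p ≥ 0, Ñ_p ⊆ M̃_{p+p̃}, where Ñ_p = {x ∈ Ω : Σ_{k=0}^{p} ‖f^k(x)‖² < (p+1)R̃²} and M̃_q = {x ∈ Ω : f^q(x) ∈ B(R̃)}. -/
open Metric Filter Finset

theorem stmt18 {n : ℕ} {Ω : Set (EuclideanSpace ℝ (Fin n))} (hΩ : IsOpen Ω)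
    (h0 : (0 : EuclideanSpace ℝ (Fin n)) ∈ Ω)
    {f : EuclideanSpace ℝ (Fin n) → EuclideanSpace ℝ (Fin n)} (hmaps : Set.MapsTo f Ω Ω) (hf0 : f 0 = 0)
    {pt : ℕ} (hpt : 1 ≤ pt)
    {R : ℝ} (hR : 0 < R) (hBR : Metric.ball (0 : EuclideanSpace ℝ (Fin n)) R ⊆ Ω)
    (hcontr : ∀ p, pt ≤ p → p ≤ 2 * pt - 1 →
      ∀ x ∈ Metric.ball (0 : EuclideanSpace ℝ (Fin n)) R \ {0}, ‖f^[p] x‖ < ‖x‖) (p : ℕ) :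
    {x ∈ Ω | ∑ k ∈ Finset.range (p + 1), ‖f^[k] x‖ ^ 2 < (p + 1) * R ^ 2} ⊆
      {x ∈ Ω | f^[p + pt] x ∈ Metric.ball (0 : EuclideanSpace ℝ (Fin n)) R} := by
  -- key lemma: iterates of points in the ball stay in the ball after ≥ pt steps
  have key : ∀ m, pt ≤ m → ∀ y ∈ Metric.ball (0 : EuclideanSpace ℝ (Fin n)) R,
      f^[m] y ∈ Metric.ball (0 : EuclideanSpace ℝ (Fin n)) R := by
    intro m
    induction m using Nat.strong_induction_on with
    | _ m ih =>
      intro hm y hy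
      by_cases hsm : m ≤ 2 * pt - 1
      · by_cases hy0 : y = (0 : EuclideanSpace ℝ (Fin n))
        · subst hy0
          rw [Function.iterate_fixed hf0]
          simpa using hR
        · have := hcontr m hm hsm y ⟨hy, hy0⟩
          rw [mem_ball_zero_iff] at hy ⊢
          exact this.trans hy
      · push_neg at hsm
        have h2 : 2 * pt ≤ m := by omega
        have hrw : f^[m] y = f^[m - pt] (f^[pt] y) := by
          rw [← Function.iterate_add_apply]
          congr 1
          omega
        rw [hrw]
        have hbase : f^[pt] y ∈ Metric.ball (0 : EuclideanSpace ℝ (Fin n)) R :=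
          ih pt (by omega) le_rfl y hy
        exact ih (m - pt) (by omega) (by omega) _ hbase
  intro x hx
  obtain ⟨hxΩ, hsum⟩ := hx
  refine ⟨hxΩ, ?_⟩
  -- find k ≤ p with ‖f^[k] x‖ < R
  have hex : ∃ k ∈ Finset.range (p + 1), ‖f^[k] x‖ < R := by
    by_contra hcon
    push_neg at hcon
    have : (p + 1 : ℝ) * R ^ 2 ≤ ∑ k ∈ Finset.range (p + 1), ‖f^[k] x‖ ^ 2 := by
      calc (p + 1 : ℝ) * R ^ 2 = ∑ _k ∈ Finset.range (p + 1), R ^ 2 := by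
            rw [Finset.sum_const, Finset.card_range]; push_cast; ring
        _ ≤ ∑ k ∈ Finset.range (p + 1), ‖f^[k] x‖ ^ 2 := by
            apply Finset.sum_le_sum
            intro k hk
            exact pow_le_pow_left₀ hR.le (hcon k hk) 2
    linarith
  obtain ⟨k, hk, hklt⟩ := hex
  rw [Finset.mem_range] at hk
  have hkball : f^[k] x ∈ Metric.ball (0 : EuclideanSpace ℝ (Fin n)) R :=
    mem_ball_zero_iff.mpr hklt
  have hrw : f^[p + pt] x = f^[p + pt - k] (f^[k] x) := by
    rw [← Function.iterate_add_apply]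
    congr 1
    omega
  rw [hrw]
  exact key (p + pt - k) (by omega) _ hkball
end
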